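/- Let p be a prime, G an abelian group, ι a nonempty finite index set, (H_i)_{i∈ι} a family of subgroups of G, and i* ∈ ι such that H_i ≤ H_{i*} for every i ∈ ι. For each i let Z_i = ℤ_p[G/H_i] be the group algebra over ℤ_p of the quotient group G/H_i, regarded as a module over the group algebra ℤ_p[G] via the projection G → G/H_i, and let ε_i : Z_i → ℤ_p be the augmentation map (sending each element of G/H_i to 1), where ℤ_p carries the ℤ_p[G]-module structure given by the augmentation of ℤ_p[G]. Let Z^0 be the kernel of the ℤ_p[G]-linear map ⊕_{i∈ι} Z_i → ℤ_p given by the sum of the ε_i. Then there is an isomorphism of ℤ_p[G]-modules Z^0 ≅ ker(ε_{i*}) ⊕ (⊕_{i∈ι, i≠i*} Z_i). -/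

import Mathlib

open DirectSum

noncomputable section

/-- The augmentation map of a group algebra over `ℤ_p`, sending each element of the
monoid `Q` to `1`. -/
def aug (p : ℕ) [Fact p.Prime] (Q : Type) [Monoid Q] :
    MonoidAlgebra (PadicInt p) Q →+* PadicInt p :=
  ((MonoidAlgebra.lift (PadicInt p) (PadicInt p) Q) (1 : Q →* PadicInt p)).toRingHom

lemma aug_single (p : ℕ) [Fact p.Prime] (Q : Type) [Monoid Q] (q : Q) (b : PadicInt p) :
    aug p Q (MonoidAlgebra.single q b) = b := by
  show (MonoidAlgebra.lift (PadicInt p) (PadicInt p) Q) (1 : Q →* PadicInt p)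
      (MonoidAlgebra.single q b) = b
  rw [MonoidAlgebra.lift_single]
  simp

lemma mapDomainRingHom_single (p : ℕ) [Fact p.Prime] {Q₁ Q₂ : Type} [Monoid Q₁] [Monoid Q₂]
    (φ : Q₁ →* Q₂) (a : Q₁) (b : PadicInt p) :
    MonoidAlgebra.mapDomainRingHom (PadicInt p) φ (MonoidAlgebra.single a b)
      = MonoidAlgebra.single (φ a) b := by
  show MonoidAlgebra.mapDomain φ (MonoidAlgebra.single a b) = MonoidAlgebra.single (φ a) b
  exact MonoidAlgebra.mapDomain_single

lemma aug_comp (p : ℕ) [Fact p.Prime] {Q₁ Q₂ : Type} [Monoid Q₁] [Monoid Q₂]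
    (φ : Q₁ →* Q₂) :
    (aug p Q₂).comp (MonoidAlgebra.mapDomainRingHom (PadicInt p) φ) = aug p Q₁ := by
  apply MonoidAlgebra.ringHom_ext <;> intro x <;>
    simp [MonoidAlgebra.of_apply, mapDomainRingHom_single, aug_single]

/-- `Z_i = ℤ_p[G/H_i]`, as a type. -/
abbrev ZQ (p : ℕ) [Fact p.Prime] {G : Type} [CommGroup G] (H : Subgroup G) : Type :=
  MonoidAlgebra (PadicInt p) (G ⧸ H)

/-- The `ℤ_p[G]`-module structure on `ℤ_p[G/H]` via the projection `G → G/H`. -/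
instance (p : ℕ) [Fact p.Prime] {G : Type} [CommGroup G] (H : Subgroup G) :
    Module (MonoidAlgebra (PadicInt p) G) (ZQ p H) :=
  Module.compHom (ZQ p H)
    (MonoidAlgebra.mapDomainRingHom (PadicInt p) (QuotientGroup.mk' H))

/-- `ℤ_p` with the `ℤ_p[G]`-module structure coming from the augmentation map of
`ℤ_p[G]`. -/
abbrev ZAug (p : ℕ) [Fact p.Prime] (G : Type) [CommGroup G] : Type := PadicInt p

instance (p : ℕ) [Fact p.Prime] (G : Type) [CommGroup G] :
    Module (MonoidAlgebra (PadicInt p) G) (ZAug p G) :=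
  Module.compHom (ZAug p G) (aug p G)

/-- The augmentation map `ε : ℤ_p[G/H] → ℤ_p` as a `ℤ_p[G]`-linear map. -/
def εlin (p : ℕ) [Fact p.Prime] {G : Type} [CommGroup G] (H : Subgroup G) :
    ZQ p H →ₗ[MonoidAlgebra (PadicInt p) G] ZAug p G where
  toFun x := aug p (G ⧸ H) x
  map_add' x y := map_add (aug p (G ⧸ H)) x y
  map_smul' r x := by
    show aug p (G ⧸ H)
        ((MonoidAlgebra.mapDomainRingHom (PadicInt p) (QuotientGroup.mk' H)) r * x)
      = aug p G r * aug p (G ⧸ H) x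
    rw [map_mul, ← RingHom.comp_apply, aug_comp]

section AuxLemmas

variable (p : ℕ) [Fact p.Prime] {G : Type} [CommGroup G]

/-- The monoid hom `G⧸H₁ →* G⧸H₂` induced by `H₁ ≤ H₂`. -/
def quotMap {H₁ H₂ : Subgroup G} (h : H₁ ≤ H₂) : (G ⧸ H₁) →* (G ⧸ H₂) :=
  QuotientGroup.map H₁ H₂ (MonoidHom.id G) (by simpa using h)

lemma quotMap_mk {H₁ H₂ : Subgroup G} (h : H₁ ≤ H₂) (g : G) :
    quotMap h (QuotientGroup.mk' H₁ g) = QuotientGroup.mk' H₂ g := rfl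

/-- The induced map `ℤ_p[G⧸H₁] → ℤ_p[G⧸H₂]` as a `ℤ_p[G]`-linear map. -/
def πlin {H₁ H₂ : Subgroup G} (h : H₁ ≤ H₂) :
    ZQ p H₁ →ₗ[MonoidAlgebra (PadicInt p) G] ZQ p H₂ where
  toFun := MonoidAlgebra.mapDomainRingHom (PadicInt p) (quotMap h)
  map_add' x y := map_add _ x y
  map_smul' r x := by
    show (MonoidAlgebra.mapDomainRingHom (PadicInt p) (quotMap h))
        ((MonoidAlgebra.mapDomainRingHom (PadicInt p) (QuotientGroup.mk' H₁)) r * x)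
      = (MonoidAlgebra.mapDomainRingHom (PadicInt p) (QuotientGroup.mk' H₂)) r
        * (MonoidAlgebra.mapDomainRingHom (PadicInt p) (quotMap h)) x
    rw [map_mul]
    congr 1
    show MonoidAlgebra.mapDomain (quotMap h)
        (MonoidAlgebra.mapDomain (QuotientGroup.mk' H₁) r)
      = MonoidAlgebra.mapDomain (QuotientGroup.mk' H₂) r
    apply MonoidAlgebra.coeff_injective
    simp only [MonoidAlgebra.mapDomain, MonoidAlgebra.coeff_ofCoeff]
    rw [← Finsupp.mapDomain_comp]
    congr 1

lemma πlin_self {H₁ : Subgroup G} (h : H₁ ≤ H₁) (x : ZQ p H₁) :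
    πlin p h x = x := by
  show MonoidAlgebra.mapDomain (quotMap h) x = x
  have : ⇑(quotMap (G := G) h) = id := by
    funext q
    exact QuotientGroup.induction_on q fun g => rfl
  apply MonoidAlgebra.coeff_injective
  simp only [MonoidAlgebra.mapDomain, MonoidAlgebra.coeff_ofCoeff]
  rw [this, Finsupp.mapDomain_id]

lemma εlin_πlin {H₁ H₂ : Subgroup G} (h : H₁ ≤ H₂) (x : ZQ p H₁) :
    εlin p H₂ (πlin p h x) = εlin p H₁ x := by
  show aug p (G ⧸ H₂) ((MonoidAlgebra.mapDomainRingHom (PadicInt p) (quotMap h)) x)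
    = aug p (G ⧸ H₁) x
  rw [← RingHom.comp_apply, aug_comp]

variable (ι : Type) [Fintype ι] [DecidableEq ι]
  (H : ι → Subgroup G) (istar : ι) (hle : ∀ i, H i ≤ H istar)

/-- Forward map. -/
def Fmap : (⨁ i, ZQ p (H i)) →ₗ[MonoidAlgebra (PadicInt p) G]
    (ZQ p (H istar) × ⨁ j : {i : ι // i ≠ istar}, ZQ p (H j.1)) :=
  LinearMap.prod
    (DirectSum.toModule _ _ _ (fun i => πlin p (hle i)))
    (DirectSum.toModule _ _ _ (fun i =>
      if h : i = istar then 0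
      else DirectSum.lof (MonoidAlgebra (PadicInt p) G) {j : ι // j ≠ istar}
        (fun j => ZQ p (H j.1)) ⟨i, h⟩))

/-- Backward map. -/
def Gmap : (ZQ p (H istar) × ⨁ j : {i : ι // i ≠ istar}, ZQ p (H j.1))
    →ₗ[MonoidAlgebra (PadicInt p) G] (⨁ i, ZQ p (H i)) :=
  LinearMap.coprod
    (DirectSum.lof (MonoidAlgebra (PadicInt p) G) ι (fun i => ZQ p (H i)) istar)
    (DirectSum.toModule _ _ _ (fun j =>
      (DirectSum.lof (MonoidAlgebra (PadicInt p) G) ι (fun i => ZQ p (H i)) j.1)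
      - (DirectSum.lof (MonoidAlgebra (PadicInt p) G) ι (fun i => ZQ p (H i)) istar).comp
          (πlin p (hle j.1))))

set_option linter.unusedSectionVars false in
lemma Fmap_lof_star (y : ZQ p (H istar)) :
    Fmap p ι H istar hle (DirectSum.lof (MonoidAlgebra (PadicInt p) G) ι (fun i => ZQ p (H i)) istar y) = (y, 0) := by
  simp only [Fmap, LinearMap.prod_apply, Function.prod, DirectSum.toModule_lof]
  rw [dif_pos trivial, πlin_self]
  simp

set_option linter.unusedSectionVars false in
lemma Fmap_lof_ne (i : ι) (h : i ≠ istar) (y : ZQ p (H i)) :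
    Fmap p ι H istar hle (DirectSum.lof (MonoidAlgebra (PadicInt p) G) ι (fun i => ZQ p (H i)) i y)
      = (πlin p (hle i) y,
        DirectSum.lof (MonoidAlgebra (PadicInt p) G) {j : ι // j ≠ istar}
          (fun j => ZQ p (H j.1)) ⟨i, h⟩ y) := by
  simp only [Fmap, LinearMap.prod_apply, Function.prod, DirectSum.toModule_lof]
  rw [dif_neg h]

set_option linter.unusedSectionVars false in
lemma hGF : (Gmap p ι H istar hle).comp (Fmap p ι H istar hle) = LinearMap.id := by
  apply DirectSum.linearMap_ext
  intro i
  ext x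
  simp only [LinearMap.comp_apply, LinearMap.id_apply]
  by_cases h : i = istar
  · subst h
    rw [Fmap_lof_star]
    simp [Gmap]
  · rw [Fmap_lof_ne p ι H istar hle i h]
    simp only [Gmap, LinearMap.coprod_apply, DirectSum.toModule_lof, LinearMap.sub_apply,
      LinearMap.comp_apply]
    abel

set_option linter.unusedSectionVars false in
lemma hFG : (Fmap p ι H istar hle).comp (Gmap p ι H istar hle) = LinearMap.id := by
  apply LinearMap.prod_ext
  · refine LinearMap.ext fun x => ?_
    simp only [LinearMap.comp_apply, LinearMap.coe_inl, LinearMap.id_apply]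
    have : Gmap p ι H istar hle (x, 0)
        = DirectSum.lof (MonoidAlgebra (PadicInt p) G) ι (fun i => ZQ p (H i)) istar x := by
      simp [Gmap]
    rw [this, Fmap_lof_star]
  · apply DirectSum.linearMap_ext
    intro j
    refine LinearMap.ext fun x => ?_
    simp only [LinearMap.comp_apply, LinearMap.coe_inr, LinearMap.id_apply]
    have : Gmap p ι H istar hle
        (0, DirectSum.lof (MonoidAlgebra (PadicInt p) G) {i : ι // i ≠ istar}
          (fun j => ZQ p (H j.1)) j x)
        = DirectSum.lof (MonoidAlgebra (PadicInt p) G) ι (fun i => ZQ p (H i)) j.1 x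
          - DirectSum.lof (MonoidAlgebra (PadicInt p) G) ι (fun i => ZQ p (H i)) istar
              (πlin p (hle j.1) x) := by
      simp [Gmap, DirectSum.toModule_lof]
    rw [this, map_sub, Fmap_lof_star, Fmap_lof_ne p ι H istar hle j.1 j.2]
    rw [Prod.mk_sub_mk]
    simp

end AuxLemmas

/-- Let `p` be a prime, `G` an abelian group, `ι` a nonempty finite index
set, `(H i)` a family of subgroups of `G` and `istar ∈ ι` with `H i ≤ H istar` for all `i`.
Let `Z⁰` be the kernel of the `ℤ_p[G]`-linear map `⊕ᵢ ℤ_p[G/Hᵢ] → ℤ_p` given by the sum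
of the augmentation maps.  Then there is an isomorphism of `ℤ_p[G]`-modules
`Z⁰ ≅ ker(ε_{istar}) ⊕ (⊕_{i ≠ istar} ℤ_p[G/Hᵢ])`. -/
theorem statement0 (p : ℕ) [Fact p.Prime] (G : Type) [CommGroup G]
    (ι : Type) [Fintype ι] [Nonempty ι] [DecidableEq ι]
    (H : ι → Subgroup G) (istar : ι) (hle : ∀ i, H i ≤ H istar) :
    Nonempty
      ((LinearMap.ker
          (DirectSum.toModule (MonoidAlgebra (PadicInt p) G) ι (ZAug p G)
            fun i => εlin p (H i)))
        ≃ₗ[MonoidAlgebra (PadicInt p) G]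
        (LinearMap.ker (εlin p (H istar)) ×
          ⨁ i : { i : ι // i ≠ istar }, ZQ p (H i.1))) := by
  classical
  set R := MonoidAlgebra (PadicInt p) G
  set T := DirectSum.toModule R ι (ZAug p G) (fun i => εlin p (H i)) with hT
  set S := (εlin p (H istar)).comp
    (LinearMap.fst R (ZQ p (H istar)) (⨁ j : {i : ι // i ≠ istar}, ZQ p (H j.1))) with hS
  have hTS : S.comp (Fmap p ι H istar hle) = T := by
    apply DirectSum.linearMap_ext
    intro i
    ext x
    simp only [LinearMap.comp_apply, hT, hS, DirectSum.toModule_lof, Fmap,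
      LinearMap.prod_apply, Function.prod, LinearMap.fst_apply, εlin_πlin]
    exact (DirectSum.toModule_lof (R := R) (φ := fun i => εlin p (H i)) i x).symm
  let E : (⨁ i, ZQ p (H i)) ≃ₗ[R]
      (ZQ p (H istar) × ⨁ j : {i : ι // i ≠ istar}, ZQ p (H j.1)) :=
    LinearEquiv.ofLinear (Fmap p ι H istar hle) (Gmap p ι H istar hle)
      (hFG p ι H istar hle) (hGF p ι H istar hle)
  have hker : LinearMap.ker T = Submodule.comap (E : (⨁ i, ZQ p (H i)) →ₗ[R] _)
      (LinearMap.ker S) := by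
    rw [← hTS, LinearMap.ker_comp]
    rfl
  have hmap : (LinearMap.ker T).map (E : (⨁ i, ZQ p (H i)) →ₗ[R] _)
      = LinearMap.ker S := by
    rw [hker]
    exact Submodule.map_comap_eq_of_surjective E.surjective _
  let e₁ := E.submoduleMap (LinearMap.ker T)
  let e₂ := LinearEquiv.ofEq _ _ hmap
  let e₃ : (LinearMap.ker S) ≃ₗ[R]
      (LinearMap.ker (εlin p (H istar)) ×
        ⨁ j : {i : ι // i ≠ istar}, ZQ p (H j.1)) :=
    { toFun := fun z => (⟨z.1.1, z.2⟩, z.1.2)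
      invFun := fun w => ⟨(w.1.1, w.2), w.1.2⟩
      map_add' := fun _ _ => rfl
      map_smul' := fun _ _ => rfl
      left_inv := fun _ => rfl
      right_inv := fun _ => rfl }
  exact ⟨(e₁.trans e₂).trans e₃⟩
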